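/- Every countable sober T1 topological space with countably many open sets has a finite open set lattice. -/

import Mathlib

open Set

section RelDefs
variable {α : Type*} (r : α → α → Prop)

/-- `D` is a (nonempty) directed subset with respect to the relation `r`. -/
def DirOn (D : Set α) : Prop :=
  D.Nonempty ∧ ∀ a ∈ D, ∀ b ∈ D, ∃ c ∈ D, r a c ∧ r b c

/-- `s` is a least upper bound of `D` with respect to `r`. -/
def IsLubR (D : Set α) (s : α) : Prop :=
  (∀ d ∈ D, r d s) ∧ ∀ u, (∀ d ∈ D, r d u) → r s u

/-- `x` is way-below `y` with respect to `r`. -/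
def WB (x y : α) : Prop :=
  ∀ D : Set α, DirOn r D → ∀ s, IsLubR r D s → r y s → ∃ d ∈ D, r x d

/-- Every directed subset has a least upper bound (dcpo property). -/
def DcpoRel : Prop := ∀ D : Set α, DirOn r D → ∃ s, IsLubR r D s

/-- Continuity: every element is the directed least upper bound of the elements way-below it. -/
def ContinuousRel : Prop :=
  ∀ y, DirOn r {x | WB r x y} ∧ IsLubR r {x | WB r x y} y

/-- Algebraicity: every element is the directed least upper bound of
the compact elements (`WB r x x`) below it. -/
def AlgebraicRel : Prop :=
  ∀ y, DirOn r {x | WB r x x ∧ r x y} ∧ IsLubR r {x | WB r x x ∧ r x y} y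

/-- Upper set generated by `F` with respect to `r`. -/
def UpS (F : Set α) : Set α := {x | ∃ f ∈ F, r f x}

/-- The set `F` is way-below the set `G` with respect to `r`. -/
def SetWB (F G : Set α) : Prop :=
  ∀ D : Set α, DirOn r D → ∀ s, IsLubR r D s → s ∈ UpS r G → ∃ d ∈ D, d ∈ UpS r F

/-- Finite sets way-below `x`. -/
def FinFam (x : α) : Set (Finset α) := {F | SetWB r (F : Set α) {x}}

/-- Finite sets `F` with `F ≪ F ≪ x`. -/
def FinFamC (x : α) : Set (Finset α) :=
  {F | SetWB r (F : Set α) (F : Set α) ∧ SetWB r (F : Set α) {x}}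

/-- Directedness of a family of finite sets in the Smyth preorder
(`F ⊑ G` iff `G ⊆ ↑F`). -/
def SmythDirected (S : Set (Finset α)) : Prop :=
  S.Nonempty ∧ ∀ F ∈ S, ∀ G ∈ S, ∃ H ∈ S,
    (H : Set α) ⊆ UpS r (F : Set α) ∧ (H : Set α) ⊆ UpS r (G : Set α)

/-- Quasicontinuity with respect to `r`. -/
def QuasicontinuousRel : Prop :=
  ∀ x, SmythDirected r (FinFam r x) ∧
    UpS r {x} = ⋂ F ∈ FinFam r x, UpS r (F : Set α)

/-- Quasialgebraicity with respect to `r`. -/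
def QuasialgebraicRel : Prop :=
  ∀ x, SmythDirected r (FinFamC r x) ∧
    UpS r {x} = ⋂ F ∈ FinFamC r x, UpS r (F : Set α)

/-- `U` is Scott open with respect to `r`: an upper set inaccessible by
least upper bounds of directed sets. -/
def IsScottOpenRel (U : Set α) : Prop :=
  (∀ x ∈ U, ∀ y, r x y → y ∈ U) ∧
    ∀ D : Set α, DirOn r D → ∀ s, IsLubR r D s → s ∈ U → ∃ d ∈ D, d ∈ U

end RelDefs

section Spec
variable {X : Type*} [TopologicalSpace X]

/-- The specialization order: `x ≤ y` iff `x ∈ cl {y}`. -/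
def sle (x y : X) : Prop := x ∈ closure ({y} : Set X)

/-- The maximal elements of `C` with respect to the specialization order. -/
def maxSpec (C : Set X) : Set X := {c | c ∈ C ∧ ∀ y ∈ C, sle c y → sle y c}

end Spec


section AuxStmt4
variable {X : Type*} [TopologicalSpace X] [T1Space X] [QuasiSober X]

/-- In a sober T1 space, every infinite open set contains a nonempty open set and an
infinite open set which are disjoint. -/
lemma stmt4_split (W : Set X) (hW : IsOpen W) (hinf : W.Infinite) :
    ∃ U V : Set X, IsOpen U ∧ IsOpen V ∧ U ⊆ W ∧ V ⊆ W ∧ U.Nonempty ∧ V.Infinite ∧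
      Disjoint U V := by
  have hne : W.Nonempty := hinf.nonempty
  -- closure W is not preirreducible
  have hpre : ¬ IsPreirreducible (closure W) := by
    intro h
    have hirr : IsIrreducible (closure W) := ⟨hne.closure, h⟩
    obtain ⟨x, hx⟩ := QuasiSober.sober hirr isClosed_closure
    have : closure W = ({x} : Set X) := by
      rw [← hx.def, closure_singleton]
    have : W ⊆ ({x} : Set X) := this ▸ subset_closure
    exact (Set.Finite.subset (Set.finite_singleton x) this).not_infinite hinf
  rw [IsPreirreducible] at hpre
  push_neg at hpre
  obtain ⟨u, v, hu, hv, hu', hv', huv⟩ := hpre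
  -- u ∩ W and v ∩ W are disjoint nonempty opens in W
  have hUn : (u ∩ W).Nonempty := by
    have := hu.inter_closure (t := W)
    have h2 : (u ∩ closure W).Nonempty := by
      obtain ⟨x, hx1, hx2⟩ := hu'; exact ⟨x, hx2, hx1⟩
    have := h2.mono this
    rwa [closure_nonempty_iff] at this
  have hVn : (v ∩ W).Nonempty := by
    have := hv.inter_closure (t := W)
    have h2 : (v ∩ closure W).Nonempty := by
      obtain ⟨x, hx1, hx2⟩ := hv'; exact ⟨x, hx2, hx1⟩
    have := h2.mono this
    rwa [closure_nonempty_iff] at this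
  have hdisj : Disjoint (u ∩ W) (v ∩ W) := by
    rw [Set.disjoint_left]
    intro x hx1 hx2
    exact Set.eq_empty_iff_forall_notMem.mp huv x ⟨subset_closure hx1.2, hx1.1, hx2.1⟩
  -- helper: from a nonempty open set, get an isolated-point split or use as is
  by_cases hvinf : (v ∩ W).Infinite
  · exact ⟨u ∩ W, v ∩ W, hu.inter hW, hv.inter hW, Set.inter_subset_right,
      Set.inter_subset_right, hUn, hvinf, hdisj⟩
  by_cases huinf : (u ∩ W).Infinite
  · exact ⟨v ∩ W, u ∩ W, hv.inter hW, hu.inter hW, Set.inter_subset_right,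
      Set.inter_subset_right, hVn, huinf, hdisj.symm⟩
  -- both finite: u ∩ W is a finite nonempty open set, so it contains an isolated point
  · rw [Set.not_infinite] at huinf
    obtain ⟨x, hx⟩ := hUn
    have hxopen : IsOpen ({x} : Set X) := by
      have h1 : IsClosed ((u ∩ W) \ {x}) := (huinf.diff (t := {x})).isClosed
      have : ({x} : Set X) = (u ∩ W) ∩ ((u ∩ W) \ {x})ᶜ := by
        ext y
        simp only [Set.mem_singleton_iff, Set.mem_inter_iff, Set.mem_compl_iff,
          Set.mem_diff, not_and, not_not]
        constructor
        · rintro rfl; exact ⟨hx, fun _ => rfl⟩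
        · rintro ⟨hy, h⟩; exact h hy
      rw [this]
      exact (hu.inter hW).inter h1.isOpen_compl
    refine ⟨{x}, W \ {x}, hxopen, hW.sdiff isClosed_singleton, ?_, Set.diff_subset,
      ⟨x, rfl⟩, hinf.diff (Set.finite_singleton x), ?_⟩
    · intro y hy; rw [Set.mem_singleton_iff] at hy; subst hy; exact hx.2
    · rw [Set.disjoint_left]
      intro y hy1 hy2
      rw [Set.mem_singleton_iff] at hy1
      exact hy2.2 hy1

end AuxStmt4

/-- A countable sober T1 space with countably many open sets has a
finite open set lattice. -/
theorem stmt4 {X : Type*} [TopologicalSpace X] [T1Space X] [QuasiSober X]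
    [Countable X] (hcnt : {U : Set X | IsOpen U}.Countable) :
    Finite {U : Set X // IsOpen U} := by
  suffices hX : Finite X by exact Subtype.finite
  by_contra hfin
  rw [not_finite_iff_infinite] at hfin
  classical
  -- every infinite open set yields a nonempty open and a smaller infinite open, disjoint
  have key : ∀ W : {W : Set X // IsOpen W ∧ W.Infinite},
      ∃ (U : Set X) (V : {W : Set X // IsOpen W ∧ W.Infinite}),
        IsOpen U ∧ U ⊆ W.1 ∧ (V.1 : Set X) ⊆ W.1 ∧ U.Nonempty ∧ Disjoint U V.1 := by
    intro W
    obtain ⟨U, V, hU, hV, hUW, hVW, hUne, hVinf, hd⟩ := stmt4_split W.1 W.2.1 W.2.2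
    exact ⟨U, ⟨V, hV, hVinf⟩, hU, hUW, hVW, hUne, hd⟩
  choose D Vf hDopen hDW hVW hDne hdisj using key
  -- iterate
  let F : ℕ → {W : Set X // IsOpen W ∧ W.Infinite} :=
    fun n => Vf^[n] ⟨Set.univ, isOpen_univ, Set.infinite_univ⟩
  have hFsucc : ∀ n, F (n + 1) = Vf (F n) := by
    intro n
    simp only [F, Function.iterate_succ_apply']
  have hFmono : ∀ m n, m ≤ n → (F n).1 ⊆ (F m).1 := by
    intro m n hmn
    induction n with
    | zero => simp_all
    | succ k ih =>
      rcases Nat.lt_or_ge m (k + 1) with h | h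
      · have h1 : (F (k + 1)).1 ⊆ (F k).1 := by rw [hFsucc]; exact hVW (F k)
        exact h1.trans (ih (Nat.lt_succ_iff.mp h))
      · have : m = k + 1 := le_antisymm hmn h
        subst this; exact subset_rfl
  -- D (F n) are pairwise disjoint nonempty open sets
  have hpair : ∀ m n : ℕ, m ≠ n → Disjoint (D (F m)) (D (F n)) := by
    have aux : ∀ m n : ℕ, m < n → Disjoint (D (F m)) (D (F n)) := by
      intro m n hmn
      have h1 : D (F n) ⊆ (F n).1 := hDW (F n)
      have h2 : (F n).1 ⊆ (F (m + 1)).1 := hFmono _ _ hmn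
      have h3 : (F (m + 1)).1 = (Vf (F m)).1 := by rw [hFsucc]
      have h4 : Disjoint (D (F m)) (Vf (F m)).1 := hdisj (F m)
      exact h4.mono_right (by rw [← h3]; exact h1.trans h2)
    intro m n hmn
    rcases lt_or_gt_of_ne hmn with h | h
    · exact aux m n h
    · exact (aux n m h).symm
  -- the map S ↦ ⋃ n ∈ S, D (F n) is injective into open sets
  have hΦopen : ∀ S : Set ℕ, IsOpen (⋃ n ∈ S, D (F n)) :=
    fun S => isOpen_biUnion (fun n _ => hDopen (F n))
  let Φ : Set ℕ → {U : Set X // IsOpen U} := fun S => ⟨⋃ n ∈ S, D (F n), hΦopen S⟩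
  have hΦinj : Function.Injective Φ := by
    intro S T hST
    have hST' : (⋃ n ∈ S, D (F n)) = ⋃ n ∈ T, D (F n) := congrArg Subtype.val hST
    ext n
    constructor
    · intro hn
      obtain ⟨x, hx⟩ := hDne (F n)
      have hx2 : x ∈ ⋃ k ∈ T, D (F k) := by
        rw [← hST']; exact Set.mem_biUnion hn hx
      obtain ⟨m, hm, hxm⟩ := Set.mem_iUnion₂.mp hx2
      by_contra h
      rcases eq_or_ne n m with rfl | hne
      · exact h hm
      · exact Set.disjoint_left.mp (hpair n m hne) hx hxm
    · intro hn
      obtain ⟨x, hx⟩ := hDne (F n)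
      have hx2 : x ∈ ⋃ k ∈ S, D (F k) := by
        rw [hST']; exact Set.mem_biUnion hn hx
      obtain ⟨m, hm, hxm⟩ := Set.mem_iUnion₂.mp hx2
      by_contra h
      rcases eq_or_ne n m with rfl | hne
      · exact h hm
      · exact Set.disjoint_left.mp (hpair n m hne) hx hxm
  -- contradiction with countability of the topology
  have : Countable {U : Set X // IsOpen U} := hcnt.to_subtype
  obtain ⟨g, hg⟩ := exists_injective_nat {U : Set X // IsOpen U}
  exact Function.cantor_injective (g ∘ Φ) (hg.comp hΦinj)
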